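/- Let δ, β > 0 and f(x) = sinh(δ√(1-x²))/(cosh(δ√(1-x²))+cosh(β√(1-x²))) on [0,1]. Then |f(x) - f(0)| ≤ c·x²/(1+√(1-x²)) for all x ∈ [0,1], with c = [δ + δcosh(δ)cosh(β) + βsinh(δ)sinh(β)]/4. -/
import Mathlib


noncomputable def tempFactor (δ β x : ℝ) : ℝ :=
  Real.sinh (δ * Real.sqrt (1 - x ^ 2)) /
    (Real.cosh (δ * Real.sqrt (1 - x ^ 2)) + Real.cosh (β * Real.sqrt (1 - x ^ 2)))

set_option maxHeartbeats 1000000 in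
theorem tempFactor_difference_bound (δ β : ℝ) (hδ : 0 < δ) (hβ : 0 < β)
    (x : ℝ) (hx : x ∈ Set.Icc (0 : ℝ) 1) :
    |tempFactor δ β x - tempFactor δ β 0| ≤
      ((δ + δ * Real.cosh δ * Real.cosh β + β * Real.sinh δ * Real.sinh β) / 4) *
        x ^ 2 / (1 + Real.sqrt (1 - x ^ 2)) := by
  obtain ⟨hx0, hx1⟩ := hx
  set u := Real.sqrt (1 - x ^ 2) with hu
  have hx2 : x ^ 2 ≤ 1 := by nlinarith
  have h1x : (0:ℝ) ≤ 1 - x ^ 2 := by linarith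
  have hu0 : 0 ≤ u := Real.sqrt_nonneg _
  have hu1 : u ≤ 1 := Real.sqrt_le_one.mpr (by nlinarith [sq_nonneg x])
  have husq : u ^ 2 = 1 - x ^ 2 := Real.sq_sqrt h1x
  set c := (δ + δ * Real.cosh δ * Real.cosh β + β * Real.sinh δ * Real.sinh β) / 4 with hc
  set g : ℝ → ℝ := fun t => Real.sinh (δ * t) / (Real.cosh (δ * t) + Real.cosh (β * t))
    with hg
  set g' : ℝ → ℝ := fun t =>
    (δ + δ * Real.cosh (δ * t) * Real.cosh (β * t)
        - β * Real.sinh (δ * t) * Real.sinh (β * t)) /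
      (Real.cosh (δ * t) + Real.cosh (β * t)) ^ 2 with hg'
  have hDpos : ∀ t : ℝ, 0 < Real.cosh (δ * t) + Real.cosh (β * t) := fun t => by
    positivity
  have hderiv : ∀ t : ℝ, HasDerivAt g (g' t) t := by
    intro t
    have hmd : HasDerivAt (fun s : ℝ => δ * s) δ t := by
      simpa using (hasDerivAt_id t).const_mul δ
    have hmb : HasDerivAt (fun s : ℝ => β * s) β t := by
      simpa using (hasDerivAt_id t).const_mul β
    have h1 : HasDerivAt (fun s => Real.sinh (δ * s)) (Real.cosh (δ * t) * δ) t := hmd.sinh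
    have h2 : HasDerivAt (fun s => Real.cosh (δ * s) + Real.cosh (β * s))
        (Real.sinh (δ * t) * δ + Real.sinh (β * t) * β) t := hmd.cosh.add hmb.cosh
    have h3 := h1.div h2 (hDpos t).ne'
    have hcs : Real.cosh (δ * t) ^ 2 = Real.sinh (δ * t) ^ 2 + 1 := Real.cosh_sq _
    have hnumeq : δ + δ * Real.cosh (δ * t) * Real.cosh (β * t)
          - β * Real.sinh (δ * t) * Real.sinh (β * t)
        = Real.cosh (δ * t) * δ * (Real.cosh (δ * t) + Real.cosh (β * t))
          - Real.sinh (δ * t) * (Real.sinh (δ * t) * δ + Real.sinh (β * t) * β) := by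
      linear_combination -δ * hcs
    show HasDerivAt g ((δ + δ * Real.cosh (δ * t) * Real.cosh (β * t)
        - β * Real.sinh (δ * t) * Real.sinh (β * t)) /
        (Real.cosh (δ * t) + Real.cosh (β * t)) ^ 2) t
    rw [hnumeq]
    exact h3
  have hsd0 : 0 ≤ Real.sinh δ := by
    have := Real.sinh_le_sinh.2 hδ.le; simpa using this
  have hsb0 : 0 ≤ Real.sinh β := by
    have := Real.sinh_le_sinh.2 hβ.le; simpa using this
  have hcd1 : 1 ≤ Real.cosh δ := Real.one_le_cosh δ
  have hcb1 : 1 ≤ Real.cosh β := Real.one_le_cosh β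
  have hnn : 0 ≤ δ + δ * Real.cosh δ * Real.cosh β + β * Real.sinh δ * Real.sinh β := by
    have h1 : 0 ≤ δ * Real.cosh δ * Real.cosh β :=
      mul_nonneg (mul_nonneg hδ.le (by linarith)) (by linarith)
    have h2 : 0 ≤ β * Real.sinh δ * Real.sinh β :=
      mul_nonneg (mul_nonneg hβ.le hsd0) hsb0
    linarith
  have hbound : ∀ t ∈ Set.Icc (0:ℝ) 1, ‖g' t‖ ≤ c := by
    intro t ⟨ht0, ht1⟩
    have hA : Real.cosh (δ * t) ≤ Real.cosh δ := by
      rw [Real.cosh_le_cosh, abs_of_nonneg (by positivity), abs_of_nonneg hδ.le]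
      nlinarith
    have hB : Real.cosh (β * t) ≤ Real.cosh β := by
      rw [Real.cosh_le_cosh, abs_of_nonneg (by positivity), abs_of_nonneg hβ.le]
      nlinarith
    have hS : Real.sinh (δ * t) ≤ Real.sinh δ := Real.sinh_le_sinh.2 (by nlinarith)
    have hT : Real.sinh (β * t) ≤ Real.sinh β := Real.sinh_le_sinh.2 (by nlinarith)
    have hS0 : 0 ≤ Real.sinh (δ * t) := by
      have := Real.sinh_le_sinh.2 (by positivity : (0:ℝ) ≤ δ * t); simpa using this
    have hT0 : 0 ≤ Real.sinh (β * t) := by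
      have := Real.sinh_le_sinh.2 (by positivity : (0:ℝ) ≤ β * t); simpa using this
    have hA1 : 1 ≤ Real.cosh (δ * t) := Real.one_le_cosh _
    have hB1 : 1 ≤ Real.cosh (β * t) := Real.one_le_cosh _
    have hD2 : (4:ℝ) ≤ (Real.cosh (δ * t) + Real.cosh (β * t)) ^ 2 := by nlinarith
    have hST : Real.sinh (δ * t) * Real.sinh (β * t) ≤ Real.sinh δ * Real.sinh β :=
      mul_le_mul hS hT hT0 hsd0
    have hAB : Real.cosh (δ * t) * Real.cosh (β * t) ≤ Real.cosh δ * Real.cosh β :=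
      mul_le_mul hA hB (by linarith) (by linarith)
    have hAB1 : (1:ℝ) ≤ Real.cosh (δ * t) * Real.cosh (β * t) := by nlinarith
    have hnum : |δ + δ * Real.cosh (δ * t) * Real.cosh (β * t)
        - β * Real.sinh (δ * t) * Real.sinh (β * t)|
        ≤ δ + δ * Real.cosh δ * Real.cosh β + β * Real.sinh δ * Real.sinh β := by
      rw [abs_le]
      constructor <;> nlinarith [mul_le_mul_of_nonneg_left hST hβ.le,
        mul_le_mul_of_nonneg_left hAB hδ.le, mul_le_mul_of_nonneg_left hAB1 hδ.le,
        mul_nonneg hβ.le (mul_nonneg hS0 hT0)]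
    rw [hg', Real.norm_eq_abs, abs_div, abs_of_nonneg (by positivity : (0:ℝ) ≤ _ ^ 2), hc]
    rw [div_le_div_iff₀ (by nlinarith) (by norm_num)]
    calc |δ + δ * Real.cosh (δ * t) * Real.cosh (β * t)
          - β * Real.sinh (δ * t) * Real.sinh (β * t)| * 4
        ≤ (δ + δ * Real.cosh δ * Real.cosh β + β * Real.sinh δ * Real.sinh β) * 4 := by
          linarith
      _ ≤ (δ + δ * Real.cosh δ * Real.cosh β + β * Real.sinh δ * Real.sinh β) *
          (Real.cosh (δ * t) + Real.cosh (β * t)) ^ 2 :=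
          mul_le_mul_of_nonneg_left hD2 hnn
  have hmvt := Convex.norm_image_sub_le_of_norm_hasDerivWithin_le
    (f := g) (f' := g') (C := c) (s := Set.Icc (0:ℝ) 1)
    (fun t ht => (hderiv t).hasDerivWithinAt) hbound (convex_Icc 0 1)
    (Set.mem_Icc.2 ⟨zero_le_one, le_refl 1⟩) (Set.mem_Icc.2 ⟨hu0, hu1⟩)
  have hkey : |g u - g 1| ≤ c * (1 - u) := by
    have habs : |u - (1:ℝ)| = 1 - u := by rw [abs_of_nonpos (by linarith)]; ring
    rwa [Real.norm_eq_abs, Real.norm_eq_abs, habs] at hmvt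
  have htf : tempFactor δ β x = g u := by rw [tempFactor, hg]
  have htf0 : tempFactor δ β 0 = g 1 := by rw [tempFactor, hg]; norm_num
  have heq : c * (1 - u) = c * x ^ 2 / (1 + u) := by
    rw [eq_div_iff (by positivity : (1:ℝ) + u ≠ 0)]
    nlinarith
  rw [htf, htf0]
  calc |g u - g 1| ≤ c * (1 - u) := hkey
    _ = c * x ^ 2 / (1 + u) := heq
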